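/- Every good configuration on the d-dimensional hypercube Q^d is coverable; that is, if C is a configuration on Q^d with nonempty support σ(C) and |C| ≥ 3^d − |σ(C)| + 1, then C is coverable. -/

import Mathlib

open Finset

/-- A pebbling step on graph `G`: remove two pebbles from a vertex `u`,
place one pebble on an adjacent vertex `v`. -/
def PebbleStep {V : Type*} (G : SimpleGraph V) (C C' : V → ℕ) : Prop :=
  ∃ u v : V, G.Adj u v ∧ 2 ≤ C u ∧ C' u = C u - 2 ∧ C' v = C v + 1 ∧
    ∀ x : V, x ≠ u → x ≠ v → C' x = C x

/-- A configuration is coverable if after some sequence of pebbling steps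
every vertex has at least one pebble. -/
def Coverable {V : Type*} (G : SimpleGraph V) (C : V → ℕ) : Prop :=
  ∃ C' : V → ℕ, Relation.ReflTransGen (PebbleStep G) C C' ∧ ∀ v : V, 1 ≤ C' v

/-- The `d`-dimensional hypercube: vertices are binary `d`-tuples, adjacent
exactly when they differ in one coordinate. -/
def cube (d : ℕ) : SimpleGraph (Fin d → Bool) where
  Adj x y := hammingDist x y = 1
  symm := ⟨fun (x y : Fin d → Bool) (h : hammingDist x y = 1) => by show hammingDist y x = 1; rwa [hammingDist_comm]⟩
  loopless := ⟨fun x (h : hammingDist x x = 1) => by simp [hammingDist_self] at h⟩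

namespace CoverPeb

lemma hamming_cons {d : ℕ} (b b' : Bool) (x y : Fin d → Bool) :
    hammingDist (Fin.cons b x : Fin (d+1) → Bool) (Fin.cons b' y) =
      (if b = b' then 0 else 1) + hammingDist x y := by
  have h : ∀ (n : ℕ) (u v : Fin n → Bool),
      hammingDist u v = (Finset.univ.filter fun i => u i ≠ v i).card := fun _ _ _ => rfl
  rw [h, h]
  rw [Finset.card_filter, Finset.card_filter, Fin.sum_univ_succ]
  simp only [Fin.cons_zero, Fin.cons_succ]
  congr 1
  by_cases hb : b = b' <;> simp [hb]

lemma adj_lift {d : ℕ} {u v : Fin d → Bool} (h : (cube d).Adj u v) (b : Bool) :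
    (cube (d+1)).Adj (Fin.cons b u) (Fin.cons b v) := by
  show hammingDist (Fin.cons b u : Fin (d+1) → Bool) (Fin.cons b v) = 1
  rw [hamming_cons]
  have h' : hammingDist u v = 1 := h
  simpa using h'

lemma adj_cross {d : ℕ} (u : Fin d → Bool) (b : Bool) :
    (cube (d+1)).Adj (Fin.cons b u) (Fin.cons (!b) u) := by
  show hammingDist (Fin.cons b u : Fin (d+1) → Bool) (Fin.cons (!b) u) = 1
  rw [hamming_cons]
  simp

def glue {d : ℕ} (D E : (Fin d → Bool) → ℕ) : (Fin (d+1) → Bool) → ℕ :=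
  fun z => if z 0 = false then D (Fin.tail z) else E (Fin.tail z)

@[simp] lemma glue_cons_false {d : ℕ} (D E : (Fin d → Bool) → ℕ) (x : Fin d → Bool) :
    glue D E (Fin.cons false x) = D x := by simp [glue, Fin.tail_cons]

@[simp] lemma glue_cons_true {d : ℕ} (D E : (Fin d → Bool) → ℕ) (x : Fin d → Bool) :
    glue D E (Fin.cons true x) = E x := by simp [glue, Fin.tail_cons]

lemma glue_comp {d : ℕ} (C : (Fin (d+1) → Bool) → ℕ) :
    glue (fun x => C (Fin.cons false x)) (fun x => C (Fin.cons true x)) = C := by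
  funext z
  have h1 : Fin.cons (z 0) (Fin.tail z) = z := Fin.cons_self_tail z
  rcases hz : z 0 with _|_
  · rw [hz] at h1; rw [← h1, glue_cons_false]
  · rw [hz] at h1; rw [← h1, glue_cons_true]

def consEq {d : ℕ} : Bool × (Fin d → Bool) ≃ (Fin (d+1) → Bool) where
  toFun p := Fin.cons p.1 p.2
  invFun z := (z 0, Fin.tail z)
  left_inv p := by simp
  right_inv z := Fin.cons_self_tail z

lemma sum_split {d : ℕ} (f : (Fin (d+1) → Bool) → ℕ) :
    ∑ z, f z = (∑ x, f (Fin.cons false x)) + (∑ x, f (Fin.cons true x)) := by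
  rw [← Fintype.sum_equiv (consEq (d := d)) (fun p => f (consEq p)) f (fun _ => rfl)]
  rw [Fintype.sum_prod_type, Fintype.sum_bool, add_comm]
  rfl

lemma card_split {d : ℕ} (f : (Fin (d+1) → Bool) → ℕ) :
    (Finset.univ.filter fun z => 0 < f z).card =
      (Finset.univ.filter fun x => 0 < f (Fin.cons false x)).card +
      (Finset.univ.filter fun x => 0 < f (Fin.cons true x)).card := by
  rw [Finset.card_filter, Finset.card_filter, Finset.card_filter]
  exact sum_split (fun z => if 0 < f z then 1 else 0)

def wt {d : ℕ} (f : (Fin d → Bool) → ℕ) : ℕ :=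
  (∑ v, f v) + (Finset.univ.filter fun v => 0 < f v).card

lemma wt_split {d : ℕ} (C : (Fin (d+1) → Bool) → ℕ) :
    wt C = wt (fun x => C (Fin.cons false x)) + wt (fun x => C (Fin.cons true x)) := by
  unfold wt
  rw [sum_split C, card_split C]
  ring


lemma lift_step_false {d : ℕ} {D D' : (Fin d → Bool) → ℕ}
    (h : PebbleStep (cube d) D D') (E : (Fin d → Bool) → ℕ) :
    PebbleStep (cube (d+1)) (glue D E) (glue D' E) := by
  obtain ⟨u, v, hadj, h2, hu, hv, hrest⟩ := h
  refine ⟨Fin.cons false u, Fin.cons false v, adj_lift hadj false, ?_, ?_, ?_, ?_⟩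
  · simpa using h2
  · simpa using hu
  · simpa using hv
  · intro z hz1 hz2
    unfold glue
    rcases hz : z 0 with _|_
    · simp only [if_pos rfl]
      apply hrest
      · intro he
        apply hz1
        rw [← Fin.cons_self_tail z, hz, he]
      · intro he
        apply hz2
        rw [← Fin.cons_self_tail z, hz, he]
    · simp

lemma lift_step_true {d : ℕ} {D D' : (Fin d → Bool) → ℕ}
    (h : PebbleStep (cube d) D D') (E : (Fin d → Bool) → ℕ) :
    PebbleStep (cube (d+1)) (glue E D) (glue E D') := by
  obtain ⟨u, v, hadj, h2, hu, hv, hrest⟩ := h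
  refine ⟨Fin.cons true u, Fin.cons true v, adj_lift hadj true, ?_, ?_, ?_, ?_⟩
  · simpa using h2
  · simpa using hu
  · simpa using hv
  · intro z hz1 hz2
    unfold glue
    rcases hz : z 0 with _|_
    · norm_num
    · simp only [Bool.true_eq_false, if_false]
      apply hrest
      · intro he
        apply hz1
        rw [← Fin.cons_self_tail z, hz, he]
      · intro he
        apply hz2
        rw [← Fin.cons_self_tail z, hz, he]

lemma lift_rtg_false {d : ℕ} {D D' : (Fin d → Bool) → ℕ}
    (h : Relation.ReflTransGen (PebbleStep (cube d)) D D') (E : (Fin d → Bool) → ℕ) :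
    Relation.ReflTransGen (PebbleStep (cube (d+1))) (glue D E) (glue D' E) := by
  induction h with
  | refl => exact .refl
  | tail _ hstep ih => exact ih.tail (lift_step_false hstep E)

lemma lift_rtg_true {d : ℕ} {D D' : (Fin d → Bool) → ℕ}
    (h : Relation.ReflTransGen (PebbleStep (cube d)) D D') (E : (Fin d → Bool) → ℕ) :
    Relation.ReflTransGen (PebbleStep (cube (d+1))) (glue E D) (glue E D') := by
  induction h with
  | refl => exact .refl
  | tail _ hstep ih => exact ih.tail (lift_step_true hstep E)

lemma sum_indicator_one {d : ℕ} (u0 : Fin d → Bool) :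
    (∑ u : Fin d → Bool, if u = u0 then 1 else 0) = 1 := by
  rw [Finset.sum_ite_eq' Finset.univ u0 (fun _ => 1)]
  simp

lemma transfer_ft {d : ℕ} : ∀ (N : ℕ) (c b e : (Fin d → Bool) → ℕ),
    (∑ u, e u) = N → (∀ u, 2 * e u ≤ c u) →
    Relation.ReflTransGen (PebbleStep (cube (d+1))) (glue c b)
      (glue (fun u => c u - 2 * e u) (fun u => b u + e u)) := by
  intro N
  induction N with
  | zero =>
    intro c b e hsum hfe
    have he : ∀ u, e u = 0 := by
      intro u
      have := Finset.sum_eq_zero_iff.mp hsum u (Finset.mem_univ u)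
      exact this
    have h1 : (fun u => c u - 2 * e u) = c := by funext u; rw [he u]; omega
    have h2 : (fun u => b u + e u) = b := by funext u; rw [he u]; omega
    rw [h1, h2]
  | succ N ih =>
    intro c b e hsum hfe
    have : ∃ u0, 0 < e u0 := by
      by_contra hno
      push_neg at hno
      have : ∀ u ∈ Finset.univ, e u = 0 := fun u _ => Nat.le_zero.mp (hno u)
      rw [Finset.sum_eq_zero this] at hsum
      omega
    obtain ⟨u0, hu0⟩ := this
    set c' : (Fin d → Bool) → ℕ := fun w => if w = u0 then c u0 - 2 else c w with hc'
    set b' : (Fin d → Bool) → ℕ := fun w => if w = u0 then b u0 + 1 else b w with hb'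
    set e' : (Fin d → Bool) → ℕ := fun w => if w = u0 then e u0 - 1 else e w with he'
    have hstep : PebbleStep (cube (d+1)) (glue c b) (glue c' b') := by
      refine ⟨Fin.cons false u0, Fin.cons true u0, ?_, ?_, ?_, ?_, ?_⟩
      · have := adj_cross u0 false
        simpa using this
      · have := hfe u0
        simp only [glue_cons_false]
        omega
      · simp [hc']
      · simp [hb']
      · intro z hz1 hz2
        unfold glue
        rcases hz : z 0 with _|_
        · simp only [if_pos rfl]
          have : Fin.tail z ≠ u0 := by
            intro he2
            apply hz1
            rw [← Fin.cons_self_tail z, hz, he2]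
          simp [hc', this]
        · have : Fin.tail z ≠ u0 := by
            intro he2
            apply hz2
            rw [← Fin.cons_self_tail z, hz, he2]
          simp [hz, hb', this]
    have hsum' : (∑ u, e' u) = N := by
      have key : (∑ u, e' u) + (∑ u : Fin d → Bool, if u = u0 then 1 else 0) = ∑ u, e u := by
        rw [← Finset.sum_add_distrib]
        apply Finset.sum_congr rfl
        intro u _
        by_cases h : u = u0
        · subst h; simp [he']; omega
        · simp [he', h]
      rw [sum_indicator_one] at key
      omega
    have hfe' : ∀ u, 2 * e' u ≤ c' u := by
      intro u
      by_cases h : u = u0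
      · subst h; simp [he', hc']; have := hfe u; omega
      · simp [he', hc', h]; exact hfe u
    have hfin := ih c' b' e' hsum' hfe'
    have heq1 : (fun u => c' u - 2 * e' u) = (fun u => c u - 2 * e u) := by
      funext u
      by_cases h : u = u0
      · subst h; simp [he', hc']; have := hfe u; omega
      · simp [he', hc', h]
    have heq2 : (fun u => b' u + e' u) = (fun u => b u + e u) := by
      funext u
      by_cases h : u = u0
      · subst h; simp [he', hb']; omega
      · simp [he', hb', h]
    rw [heq1, heq2] at hfin
    exact hfin.head hstep

lemma transfer_tf {d : ℕ} : ∀ (N : ℕ) (c b e : (Fin d → Bool) → ℕ),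
    (∑ u, e u) = N → (∀ u, 2 * e u ≤ b u) →
    Relation.ReflTransGen (PebbleStep (cube (d+1))) (glue c b)
      (glue (fun u => c u + e u) (fun u => b u - 2 * e u)) := by
  intro N
  induction N with
  | zero =>
    intro c b e hsum hfe
    have he : ∀ u, e u = 0 := fun u => Finset.sum_eq_zero_iff.mp hsum u (Finset.mem_univ u)
    have h1 : (fun u => b u - 2 * e u) = b := by funext u; rw [he u]; omega
    have h2 : (fun u => c u + e u) = c := by funext u; rw [he u]; omega
    rw [h1, h2]
  | succ N ih =>
    intro c b e hsum hfe
    have : ∃ u0, 0 < e u0 := by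
      by_contra hno
      push_neg at hno
      have : ∀ u ∈ Finset.univ, e u = 0 := fun u _ => Nat.le_zero.mp (hno u)
      rw [Finset.sum_eq_zero this] at hsum
      omega
    obtain ⟨u0, hu0⟩ := this
    set c' : (Fin d → Bool) → ℕ := fun w => if w = u0 then c u0 + 1 else c w with hc'
    set b' : (Fin d → Bool) → ℕ := fun w => if w = u0 then b u0 - 2 else b w with hb'
    set e' : (Fin d → Bool) → ℕ := fun w => if w = u0 then e u0 - 1 else e w with he'
    have hstep : PebbleStep (cube (d+1)) (glue c b) (glue c' b') := by
      refine ⟨Fin.cons true u0, Fin.cons false u0, ?_, ?_, ?_, ?_, ?_⟩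
      · have := adj_cross u0 true
        simpa using this
      · have := hfe u0
        simp only [glue_cons_true]
        omega
      · simp [hb']
      · simp [hc']
      · intro z hz1 hz2
        unfold glue
        rcases hz : z 0 with _|_
        · simp only [if_pos rfl]
          have : Fin.tail z ≠ u0 := by
            intro he2
            apply hz2
            rw [← Fin.cons_self_tail z, hz, he2]
          simp [hc', this]
        · have : Fin.tail z ≠ u0 := by
            intro he2
            apply hz1
            rw [← Fin.cons_self_tail z, hz, he2]
          simp [hz, hb', this]
    have hsum' : (∑ u, e' u) = N := by
      have key : (∑ u, e' u) + (∑ u : Fin d → Bool, if u = u0 then 1 else 0) = ∑ u, e u := by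
        rw [← Finset.sum_add_distrib]
        apply Finset.sum_congr rfl
        intro u _
        by_cases h : u = u0
        · subst h; simp [he']; omega
        · simp [he', h]
      rw [sum_indicator_one] at key
      omega
    have hfe' : ∀ u, 2 * e' u ≤ b' u := by
      intro u
      by_cases h : u = u0
      · subst h; simp [he', hb']; have := hfe u; omega
      · simp [he', hb', h]; exact hfe u
    have hfin := ih c' b' e' hsum' hfe'
    have heq1 : (fun u => b' u - 2 * e' u) = (fun u => b u - 2 * e u) := by
      funext u
      by_cases h : u = u0
      · subst h; simp [he', hb']; have := hfe u; omega
      · simp [he', hb', h]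
    have heq2 : (fun u => c' u + e' u) = (fun u => c u + e u) := by
      funext u
      by_cases h : u = u0
      · subst h; simp [he', hc']; omega
      · simp [he', hc', h]
    rw [heq1, heq2] at hfin
    exact hfin.head hstep


lemma card_le_sum {d : ℕ} (f : (Fin d → Bool) → ℕ) :
    (Finset.univ.filter fun v => 0 < f v).card ≤ ∑ v, f v := by
  rw [Finset.card_filter]
  apply Finset.sum_le_sum
  intro u _
  by_cases h : 0 < f u <;> simp [h] <;> omega

lemma supp_pos {d : ℕ} {f : (Fin d → Bool) → ℕ} (h : 0 < ∑ v, f v) :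
    0 < (Finset.univ.filter fun v => 0 < f v).card := by
  by_contra hno
  push_neg at hno
  have h0 : (Finset.univ.filter fun v => 0 < f v) = ∅ := by
    apply Finset.card_eq_zero.mp; omega
  have : ∀ u ∈ Finset.univ, f u = 0 := by
    intro u hu
    by_contra hfu
    have : u ∈ Finset.univ.filter fun v => 0 < f v := by
      simp only [Finset.mem_filter]; exact ⟨hu, Nat.pos_of_ne_zero hfu⟩
    rw [h0] at this
    simp at this
  rw [Finset.sum_eq_zero this] at h
  omega

lemma exists_le_sum {d : ℕ} (g : (Fin d → Bool) → ℕ) :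
    ∀ (t : ℕ), t ≤ ∑ u, g u → ∃ f : (Fin d → Bool) → ℕ, (∀ u, f u ≤ g u) ∧ ∑ u, f u = t := by
  intro t
  induction t with
  | zero => exact fun _ => ⟨fun _ => 0, fun _ => Nat.zero_le _, Finset.sum_const_zero⟩
  | succ t ih =>
    intro ht
    obtain ⟨f, hf, hsum⟩ := ih (by omega)
    have : ∃ u0, f u0 < g u0 := by
      by_contra hno
      push_neg at hno
      have : (∑ u, g u) ≤ ∑ u, f u := Finset.sum_le_sum (fun u _ => hno u)
      omega
    obtain ⟨u0, hu0⟩ := this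
    refine ⟨fun w => f w + if w = u0 then 1 else 0, ?_, ?_⟩
    · intro u
      by_cases h : u = u0
      · subst h; simpa using hu0
      · simp [h]; exact hf u
    · rw [Finset.sum_add_distrib, hsum, sum_indicator_one]

lemma pow23 : ∀ d : ℕ, 2 ≤ d → 2^(d+1) ≤ 3^d := by
  intro d
  induction d with
  | zero => omega
  | succ n ih =>
    intro h
    rcases Nat.lt_or_ge n 2 with h2 | h2
    · interval_cases n
      · omega
      · norm_num
    · have := ih h2
      have h3 : (2:ℕ)^(n+1+1) = 2 * 2^(n+1) := by ring
      have h4 : (3:ℕ)^(n+1) = 3 * 3^n := by ring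
      omega

lemma three_le_pow {d : ℕ} (hd : 1 ≤ d) : 3 ≤ 3^d := by
  calc (3:ℕ) = 3^1 := by norm_num
  _ ≤ 3^d := Nat.pow_le_pow_right (by norm_num) hd

lemma card_le_two_pow {d : ℕ} (p : (Fin d → Bool) → Prop) [DecidablePred p] :
    (Finset.univ.filter p).card ≤ 2^d := by
  calc (Finset.univ.filter p).card ≤ (Finset.univ : Finset (Fin d → Bool)).card :=
        Finset.card_filter_le _ _
  _ = 2^d := by rw [Finset.card_univ]; simp [Fintype.card_fun]

lemma sum_ind_card {d : ℕ} (s : Finset (Fin d → Bool)) (k : ℕ) :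
    (∑ u, if u ∈ s then k else 0) = k * s.card := by
  rw [Finset.sum_ite_mem, Finset.univ_inter, Finset.sum_const, smul_eq_mul, mul_comm]

-- assembly
lemma assemble {d : ℕ} (ih : ∀ D : (Fin d → Bool) → ℕ, 3^d + 1 ≤ wt D → Coverable (cube d) D)
    {A B : (Fin d → Bool) → ℕ} (hA : 3^d + 1 ≤ wt A) (hB : 3^d + 1 ≤ wt B) :
    ∃ C' : (Fin (d+1) → Bool) → ℕ,
      Relation.ReflTransGen (PebbleStep (cube (d+1))) (glue A B) C' ∧ ∀ v, 1 ≤ C' v := by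
  obtain ⟨A', rA, hA'⟩ := ih A hA
  obtain ⟨B', rB, hB'⟩ := ih B hB
  refine ⟨glue A' B', ?_, ?_⟩
  · exact (lift_rtg_false rA B).trans (lift_rtg_true rB A')
  · intro z
    unfold glue
    by_cases hz : z 0 = false
    · rw [if_pos hz]; exact hA' _
    · rw [if_neg hz]; exact hB' _


lemma base0 (C : (Fin 0 → Bool) → ℕ) (h : 3^0 + 1 ≤ wt C) : Coverable (cube 0) C := by
  refine ⟨C, .refl, ?_⟩
  intro v
  unfold wt at h
  have hcard := card_le_sum C
  have hsum : 0 < ∑ u, C u := by omega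
  have : ∃ u, 0 < C u := by
    by_contra hno
    push_neg at hno
    have : ∀ u ∈ Finset.univ, C u = 0 := fun u _ => Nat.le_zero.mp (hno u)
    rw [Finset.sum_eq_zero this] at hsum
    omega
  obtain ⟨u, hu⟩ := this
  have : v = u := by funext i; exact i.elim0
  rw [this]
  exact hu

-- the two vertices of Q^1
def q0 : Fin 1 → Bool := fun _ => false
def q1 : Fin 1 → Bool := fun _ => true

lemma q1_dichotomy (z : Fin 1 → Bool) : z = q0 ∨ z = q1 := by
  rcases hz : z 0 with _|_
  · left; funext i
    have : i = 0 := Subsingleton.elim i 0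
    rw [this, hz]; rfl
  · right; funext i
    have : i = 0 := Subsingleton.elim i 0
    rw [this, hz]; rfl

lemma q_ne : q0 ≠ q1 := by
  intro h
  have := congrFun h 0
  simp [q0, q1] at this

lemma q_adj : (cube 1).Adj q0 q1 := by
  show hammingDist q0 q1 = 1
  have : hammingDist q0 q1 = (Finset.univ.filter fun i : Fin 1 => q0 i ≠ q1 i).card := rfl
  rw [this]
  have : (Finset.univ.filter fun i : Fin 1 => q0 i ≠ q1 i) = Finset.univ := by
    apply Finset.filter_true_of_mem
    intro i _
    simp [q0, q1]
  rw [this, Finset.card_univ]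
  simp

lemma sum_q (f : (Fin 1 → Bool) → ℕ) : ∑ v, f v = f q0 + f q1 := by
  rw [← Fintype.sum_equiv ((Equiv.funUnique (Fin 1) Bool).symm) (fun b => f ((Equiv.funUnique (Fin 1) Bool).symm b)) f (fun _ => rfl)]
  rw [Fintype.sum_bool, add_comm]
  rfl

lemma card_q (f : (Fin 1 → Bool) → ℕ) :
    (Finset.univ.filter fun v => 0 < f v).card = (if 0 < f q0 then 1 else 0) + (if 0 < f q1 then 1 else 0) := by
  rw [Finset.card_filter, sum_q]

lemma base1 (C : (Fin 1 → Bool) → ℕ) (h : 3^1 + 1 ≤ wt C) : Coverable (cube 1) C := by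
  unfold wt at h
  rw [sum_q C, card_q C] at h
  by_cases h0 : 0 < C q0
  · by_cases h1 : 0 < C q1
    · exact ⟨C, .refl, fun v => by rcases q1_dichotomy v with hv | hv <;> rw [hv] <;> omega⟩
    · -- C q1 = 0, C q0 ≥ 3
      have hc0 : 3 ≤ C q0 := by simp [h0, h1] at h; omega
      refine ⟨fun z => if z = q1 then 1 else C q0 - 2, ?_, ?_⟩
      · apply Relation.ReflTransGen.single
        refine ⟨q0, q1, q_adj, by omega, ?_, ?_, ?_⟩
        · simp [q_ne]
        · simp; omega
        · intro x hx0 hx1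
          rcases q1_dichotomy x with hv | hv
          · exact absurd hv hx0
          · exact absurd hv hx1
      · intro v
        rcases q1_dichotomy v with hv | hv <;> rw [hv]
        · simp [q_ne]; omega
        · simp
  · by_cases h1 : 0 < C q1
    · have hc1 : 3 ≤ C q1 := by simp [h0, h1] at h; omega
      refine ⟨fun z => if z = q0 then 1 else C q1 - 2, ?_, ?_⟩
      · apply Relation.ReflTransGen.single
        refine ⟨q1, q0, q_adj.symm, by omega, ?_, ?_, ?_⟩
        · simp [Ne.symm q_ne]
        · simp; omega
        · intro x hx1 hx0
          rcases q1_dichotomy x with hv | hv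
          · exact absurd hv hx0
          · exact absurd hv hx1
      · intro v
        rcases q1_dichotomy v with hv | hv <;> rw [hv]
        · simp
        · simp [Ne.symm q_ne]; omega
    · simp [h0, h1] at h
      omega


lemma wt_sub_bound {d : ℕ} (c e : (Fin d → Bool) → ℕ) (S : Finset (Fin d → Bool))
    (hfe : ∀ u, 2 * e u ≤ c u)
    (hkeep : ∀ u, 0 < c u → u ∉ S → 0 < c u - 2 * e u) :
    (∑ u, c u) + (Finset.univ.filter fun u => 0 < c u).card ≤
      wt (fun u => c u - 2 * e u) + 2 * (∑ u, e u) + S.card := by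
  have hsum : (∑ u, (c u - 2 * e u)) + 2 * (∑ u, e u) = ∑ u, c u := by
    rw [Finset.mul_sum, ← Finset.sum_add_distrib]
    apply Finset.sum_congr rfl
    intro u _
    have := hfe u
    omega
  have hsupp : (Finset.univ.filter fun u => 0 < c u).card - S.card ≤
      (Finset.univ.filter fun u => 0 < c u - 2 * e u).card := by
    calc (Finset.univ.filter fun u => 0 < c u).card - S.card
        ≤ ((Finset.univ.filter fun u => 0 < c u) \ S).card := Finset.le_card_sdiff _ _
      _ ≤ (Finset.univ.filter fun u => 0 < c u - 2 * e u).card := by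
          apply Finset.card_le_card
          intro u hu
          rw [Finset.mem_sdiff, Finset.mem_filter] at hu
          rw [Finset.mem_filter]
          exact ⟨hu.1.1, hkeep u hu.1.2 hu.2⟩
  unfold wt
  beta_reduce
  omega

lemma wt_add_bound {d : ℕ} (b e : (Fin d → Bool) → ℕ) (S : Finset (Fin d → Bool))
    (hS : ∀ u ∈ S, b u = 0 ∧ 1 ≤ e u) :
    (∑ u, b u) + (Finset.univ.filter fun u => 0 < b u).card + (∑ u, e u) + S.card ≤
      wt (fun u => b u + e u) := by
  have hsum : (∑ u, (b u + e u)) = (∑ u, b u) + ∑ u, e u := Finset.sum_add_distrib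
  have hdisj : Disjoint (Finset.univ.filter fun u => 0 < b u) S := by
    rw [Finset.disjoint_left]
    intro u hu huS
    rw [Finset.mem_filter] at hu
    have := (hS u huS).1
    omega
  have hsupp : (Finset.univ.filter fun u => 0 < b u).card + S.card ≤
      (Finset.univ.filter fun u => 0 < b u + e u).card := by
    rw [← Finset.card_union_of_disjoint hdisj]
    apply Finset.card_le_card
    intro u hu
    rw [Finset.mem_union, Finset.mem_filter] at hu
    rw [Finset.mem_filter]
    refine ⟨Finset.mem_univ u, ?_⟩
    rcases hu with hu | hu
    · omega
    · have := (hS u hu).2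
      omega
  unfold wt
  beta_reduce
  omega


def extraF {d : ℕ} (c b : (Fin d → Bool) → ℕ) : (Fin d → Bool) → ℕ := fun u =>
  if 3 ≤ c u ∧ b u = 0 then (c u - 1) / 2 - 1
  else if 3 ≤ c u then (c u - 1) / 2 else 0

set_option maxHeartbeats 2000000 in
lemma core (d : ℕ) (hd : 1 ≤ d) (c b : (Fin d → Bool) → ℕ)
    (h1 : 3^(d+1) + 1 ≤ wt c + wt b) (h2 : wt b ≤ 3^d) :
    ∃ e : (Fin d → Bool) → ℕ, (∀ u, 2 * e u ≤ c u) ∧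
      3^d + 1 ≤ wt (fun u => c u - 2 * e u) ∧ 3^d + 1 ≤ wt (fun u => b u + e u) := by
  classical
  have hwc : wt c = (∑ u, c u) + (Finset.univ.filter fun u => 0 < c u).card := rfl
  have hwb : wt b = (∑ u, b u) + (Finset.univ.filter fun u => 0 < b u).card := rfl
  set na := ∑ u, c u with hna
  set ka := (Finset.univ.filter fun u => 0 < c u).card with hka
  set nb := ∑ u, b u with hnb
  set kb := (Finset.univ.filter fun u => 0 < b u).card with hkb
  set Y := Finset.univ.filter (fun u => 3 ≤ c u ∧ b u = 0) with hYdef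
  set X := Finset.univ.filter (fun u => c u = 2 ∧ b u = 0) with hXdef
  have hkb_nb : kb ≤ nb := card_le_sum b
  have hka2 : ka ≤ 2^d := card_le_two_pow _
  have h3d : 3 ≤ 3^d := three_le_pow hd
  have hpow : 3^(d+1) = 3 * 3^d := by ring
  have h23 : 2^d ≤ 3^d := Nat.pow_le_pow_left (by norm_num) d
  have hYX : Disjoint Y X := by
    rw [Finset.disjoint_left]
    intro u huY huX
    rw [hYdef, Finset.mem_filter] at huY
    rw [hXdef, Finset.mem_filter] at huX
    omega
  have hSB : nb + kb = 0 ∨ 2 ≤ nb + kb := by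
    rcases Nat.eq_zero_or_pos nb with h | h
    · left; omega
    · right; have := supp_pos (f := b) h; omega
  have hylem : nb + kb = 0 → 1 ≤ Y.card := by
    intro h0
    have hb0 : ∀ u, b u = 0 := by
      intro u
      exact Finset.sum_eq_zero_iff.mp (by omega : (∑ u, b u) = 0) u (Finset.mem_univ u)
    by_contra hy
    push_neg at hy
    have hYempty : Y = ∅ := Finset.card_eq_zero.mp (by omega)
    have hcle : ∀ u, c u ≤ 2 := by
      intro u
      by_contra hc
      push_neg at hc
      have : u ∈ Y := by
        rw [hYdef, Finset.mem_filter]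
        exact ⟨Finset.mem_univ u, by omega, hb0 u⟩
      rw [hYempty] at this
      simp at this
    have hna2 : na ≤ 2 * ka := by
      rw [hna, hka, Finset.card_filter, Finset.mul_sum]
      apply Finset.sum_le_sum
      intro u _
      have := hcle u
      by_cases h : 0 < c u <;> simp [h] <;> omega
    omega
  -- CASE 3a
  by_cases hcase1 : 3^d + 1 ≤ nb + kb + 2 * Y.card
  · set Dn := 3^d + 1 - (nb + kb) with hDn
    set s1 := (Dn + 1) / 2 with hs1
    have hdiv := Nat.div_add_mod (Dn + 1) 2
    have hmod : (Dn + 1) % 2 < 2 := Nat.mod_lt _ (by norm_num)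
    have hs1Y : s1 ≤ Y.card := by omega
    obtain ⟨Y', hY'sub, hY'card⟩ := Finset.exists_subset_card_eq hs1Y
    have hmemY' : ∀ u ∈ Y', 3 ≤ c u ∧ b u = 0 := by
      intro u hu
      have := hY'sub hu
      rw [hYdef, Finset.mem_filter] at this
      exact this.2
    refine ⟨fun u => if u ∈ Y' then 1 else 0, ?_, ?_, ?_⟩
    · intro u
      by_cases h : u ∈ Y'
      · have := (hmemY' u h).1; simp [h]; omega
      · simp [h]
    · have hb1 := wt_sub_bound c (fun u => if u ∈ Y' then 1 else 0) ∅
        (by intro u; by_cases h : u ∈ Y'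
            · have := (hmemY' u h).1; simp [h]; omega
            · simp [h])
        (by intro u hu _
            by_cases h : u ∈ Y'
            · have := (hmemY' u h).1; simp [h]; omega
            · simp [h]; omega)
      rw [sum_ind_card Y' 1, hY'card] at hb1
      simp only [Finset.card_empty] at hb1
      beta_reduce at hb1 ⊢
      omega
    · have hb2 := wt_add_bound b (fun u => if u ∈ Y' then 1 else 0) Y'
        (by intro u hu; exact ⟨(hmemY' u hu).2, by simp [hu]⟩)
      rw [sum_ind_card Y' 1, hY'card] at hb2
      beta_reduce at hb2 ⊢
      omega
  · -- CASE 3b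
    by_cases hcase2 : 3^d + 1 ≤ nb + kb + 2 * Y.card + 2 * X.card
    · set Dn := 3^d + 1 - (nb + kb) with hDn
      set A := Dn - 2 * Y.card with hA
      set j := (A + 1) / 2 with hj
      have hdiv := Nat.div_add_mod (A + 1) 2
      have hmod : (A + 1) % 2 < 2 := Nat.mod_lt _ (by norm_num)
      have hjX : j ≤ X.card := by omega
      obtain ⟨mm, hmm⟩ : Odd (3^d) := Odd.pow (⟨1, by norm_num⟩ : Odd 3)
      have hj32 : j + 2 ≤ 3^d := by
        rcases hSB with h0 | h0
        · have := hylem h0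
          omega
        · omega
      obtain ⟨X', hX'sub, hX'card⟩ := Finset.exists_subset_card_eq hjX
      have hdisj' : Disjoint Y X' := hYX.mono_right hX'sub
      have hmemU : ∀ u ∈ Y ∪ X', 2 ≤ c u ∧ b u = 0 := by
        intro u hu
        rw [Finset.mem_union] at hu
        rcases hu with hu | hu
        · rw [hYdef, Finset.mem_filter] at hu; omega
        · have := hX'sub hu
          rw [hXdef, Finset.mem_filter] at this; omega
      have hUcard : (Y ∪ X').card = Y.card + j := by
        rw [Finset.card_union_of_disjoint hdisj', hX'card]
      refine ⟨fun u => if u ∈ Y ∪ X' then 1 else 0, ?_, ?_, ?_⟩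
      · intro u
        by_cases h : u ∈ Y ∪ X'
        · have := (hmemU u h).1; simp [h]; omega
        · simp [h]
      · have hb1 := wt_sub_bound c (fun u => if u ∈ Y ∪ X' then 1 else 0) X'
          (by intro u
              by_cases h : u ∈ Y ∪ X'
              · have := (hmemU u h).1; simp [h]; omega
              · simp [h])
          (by intro u hu hnX
              by_cases h : u ∈ Y ∪ X'
              · have h3 : u ∈ Y := by
                  rw [Finset.mem_union] at h
                  tauto
                rw [hYdef, Finset.mem_filter] at h3
                simp [h]; omega
              · simp [h]; omega)
        rw [sum_ind_card (Y ∪ X') 1, hUcard, hX'card] at hb1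
        beta_reduce at hb1 ⊢
        omega
      · have hb2 := wt_add_bound b (fun u => if u ∈ Y ∪ X' then 1 else 0) (Y ∪ X')
          (by intro u hu; exact ⟨(hmemU u hu).2, by simp [hu]⟩)
        rw [sum_ind_card (Y ∪ X') 1, hUcard] at hb2
        beta_reduce at hb2 ⊢
        omega
    · -- CASE 3c
      set K1 := Finset.univ.filter (fun u => c u = 1) with hK1def
      set OC := Finset.univ.filter (fun u => 2 ≤ c u ∧ 0 < b u) with hOCdef
      set T := ∑ u, (c u - 1) / 2 with hT
      have hK1ka : K1.card ≤ ka := by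
        rw [hka]
        apply Finset.card_le_card
        intro u hu
        rw [hK1def, Finset.mem_filter] at hu
        rw [Finset.mem_filter]
        exact ⟨hu.1, by omega⟩
      have hOCkb : OC.card ≤ kb := by
        rw [hkb]
        apply Finset.card_le_card
        intro u hu
        rw [hOCdef, Finset.mem_filter] at hu
        rw [Finset.mem_filter]
        exact ⟨hu.1, hu.2.2⟩
      have hK12 : K1.card ≤ 2^d := card_le_two_pow _
      -- capacity claim
      have hclaim : 3^d + 1 ≤ nb + kb + T + Y.card + 2 * X.card := by
        by_contra hno
        push_neg at hno
        have key : na ≤ 2 * T + (2 * Y.card + (4 * X.card + (K1.card + 2 * OC.card))) := by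
          rw [hna, hT, Finset.mul_sum]
          have : ∀ u ∈ Finset.univ, c u ≤ 2 * ((c u - 1) / 2) +
              ((if u ∈ Y then 2 else 0) + ((if u ∈ X then 4 else 0) +
               ((if u ∈ K1 then 1 else 0) + (if u ∈ OC then 2 else 0)))) := by
            intro u _
            have hdd := Nat.div_add_mod (c u - 1) 2
            have hm2 : (c u - 1) % 2 < 2 := Nat.mod_lt _ (by norm_num)
            simp only [hYdef, hXdef, hK1def, hOCdef, Finset.mem_filter, Finset.mem_univ,
              true_and]
            split_ifs <;> omega
          calc na ≤ ∑ u, (2 * ((c u - 1) / 2) +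
              ((if u ∈ Y then 2 else 0) + ((if u ∈ X then 4 else 0) +
               ((if u ∈ K1 then 1 else 0) + (if u ∈ OC then 2 else 0))))) := by
                rw [hna]; exact Finset.sum_le_sum this
          _ = _ := by
                rw [Finset.sum_add_distrib, Finset.sum_add_distrib, Finset.sum_add_distrib,
                  Finset.sum_add_distrib, sum_ind_card, sum_ind_card, sum_ind_card,
                  sum_ind_card, one_mul]
        have hcontra : 3^d + 1 ≤ ka + K1.card := by omega
        rcases Nat.lt_or_ge d 2 with hd2 | hd2
        · have hd1 : d = 1 := by omega
          subst hd1
          have h31 : (3:ℕ)^1 = 3 := by norm_num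
          have h21 : (2:ℕ)^1 = 2 := by norm_num
          have hK1c : K1.card = 2 := by omega
          have hK1univ : K1 = Finset.univ := by
            apply Finset.eq_univ_of_card
            rw [hK1c, Fintype.card_fun]
            norm_num
          have hall : ∀ u, c u = 1 := by
            intro u
            have : u ∈ K1 := hK1univ ▸ Finset.mem_univ u
            rw [hK1def, Finset.mem_filter] at this
            exact this.2
          have hna1 : na = 2 := by
            rw [hna]
            rw [Finset.sum_congr rfl (fun u _ => hall u), Finset.sum_const, smul_eq_mul,
              mul_one, Finset.card_univ, Fintype.card_fun]
            norm_num
          omega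
        · have hp := pow23 d hd2
          have h2d : (2:ℕ)^(d+1) = 2 * 2^d := by ring
          omega
      -- strategy 3c
      set tt := 3^d + 1 - (nb + kb + 2 * Y.card + 2 * X.card) with htt
      have hext : T ≤ (∑ u, extraF c b u) + Y.card := by
        have : ∀ u ∈ Finset.univ, (c u - 1) / 2 ≤ extraF c b u + (if u ∈ Y then 1 else 0) := by
          intro u _
          have hdd := Nat.div_add_mod (c u - 1) 2
          have hm2 : (c u - 1) % 2 < 2 := Nat.mod_lt _ (by norm_num)
          simp only [extraF, hYdef, Finset.mem_filter, Finset.mem_univ, true_and]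
          split_ifs <;> omega
        calc T ≤ ∑ u, (extraF c b u + (if u ∈ Y then 1 else 0)) := by
              rw [hT]; exact Finset.sum_le_sum this
        _ = (∑ u, extraF c b u) + Y.card := by
              rw [Finset.sum_add_distrib, sum_ind_card, one_mul]
      have httle : tt ≤ ∑ u, extraF c b u := by omega
      obtain ⟨f, hfle, hfsum⟩ := exists_le_sum (extraF c b) tt httle
      have hUcard : (Y ∪ X).card = Y.card + X.card := Finset.card_union_of_disjoint hYX
      have hfeas : ∀ u, 2 * ((if u ∈ Y ∪ X then 1 else 0) + f u) ≤ c u := by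
        intro u
        have hfu := hfle u
        have hdd := Nat.div_add_mod (c u - 1) 2
        have hm2 : (c u - 1) % 2 < 2 := Nat.mod_lt _ (by norm_num)
        by_cases hY3 : 3 ≤ c u ∧ b u = 0
        · have hmem : u ∈ Y ∪ X := Finset.mem_union_left _
            (by rw [hYdef, Finset.mem_filter]; exact ⟨Finset.mem_univ u, hY3⟩)
          have hex : extraF c b u = (c u - 1) / 2 - 1 := by
            unfold extraF; simp only [if_pos hY3]
          rw [hex] at hfu
          rw [if_pos hmem]
          omega
        · by_cases hX2 : c u = 2 ∧ b u = 0
          · have hmem : u ∈ Y ∪ X := Finset.mem_union_right _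
              (by rw [hXdef, Finset.mem_filter]; exact ⟨Finset.mem_univ u, hX2⟩)
            have hex : extraF c b u = 0 := by
              unfold extraF; simp only [if_neg hY3]
              rw [if_neg (by omega)]
            rw [hex] at hfu
            rw [if_pos hmem]
            omega
          · have hmem : u ∉ Y ∪ X := by
              rw [Finset.mem_union, hYdef, hXdef, Finset.mem_filter, Finset.mem_filter]
              push_neg
              constructor
              · intro _ h3 hb0; exact hY3 ⟨h3, hb0⟩
              · intro _ h3 hb0; exact hX2 ⟨h3, hb0⟩
            rw [if_neg hmem]
            unfold extraF at hfu
            by_cases h3c : 3 ≤ c u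
            · rw [if_neg hY3, if_pos h3c] at hfu
              omega
            · rw [if_neg hY3, if_neg h3c] at hfu
              omega
      have hkeep : ∀ u, 0 < c u → u ∉ X →
          0 < c u - 2 * ((if u ∈ Y ∪ X then 1 else 0) + f u) := by
        intro u hcu hnX
        have hfu := hfle u
        have hdd := Nat.div_add_mod (c u - 1) 2
        have hm2 : (c u - 1) % 2 < 2 := Nat.mod_lt _ (by norm_num)
        by_cases hY3 : 3 ≤ c u ∧ b u = 0
        · have hmem : u ∈ Y ∪ X := Finset.mem_union_left _
            (by rw [hYdef, Finset.mem_filter]; exact ⟨Finset.mem_univ u, hY3⟩)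
          have hex : extraF c b u = (c u - 1) / 2 - 1 := by
            unfold extraF; simp only [if_pos hY3]
          rw [hex] at hfu
          rw [if_pos hmem]
          omega
        · have hmem : u ∉ Y ∪ X := by
            rw [Finset.mem_union, hYdef, hXdef, Finset.mem_filter, Finset.mem_filter]
            push_neg
            refine ⟨fun _ h3 hb0 => hY3 ⟨h3, hb0⟩, fun _ h3 hb0 => ?_⟩
            exact hnX (by rw [hXdef, Finset.mem_filter]; exact ⟨Finset.mem_univ u, h3, hb0⟩)
          rw [if_neg hmem]
          unfold extraF at hfu
          by_cases h3c : 3 ≤ c u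
          · rw [if_neg hY3, if_pos h3c] at hfu
            omega
          · rw [if_neg hY3, if_neg h3c] at hfu
            omega
      have hnew : ∀ u ∈ Y ∪ X, b u = 0 ∧ 1 ≤ (if u ∈ Y ∪ X then 1 else 0) + f u := by
        intro u hu
        refine ⟨?_, by rw [if_pos hu]; omega⟩
        rw [Finset.mem_union] at hu
        rcases hu with hu | hu
        · rw [hYdef, Finset.mem_filter] at hu; exact hu.2.2
        · rw [hXdef, Finset.mem_filter] at hu; exact hu.2.2
      have hesum : (∑ u, ((if u ∈ Y ∪ X then 1 else 0) + f u)) = (Y.card + X.card) + tt := by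
        rw [Finset.sum_add_distrib, sum_ind_card, one_mul, hUcard, hfsum]
      refine ⟨fun u => (if u ∈ Y ∪ X then 1 else 0) + f u, hfeas, ?_, ?_⟩
      · have hb1 := wt_sub_bound c (fun u => (if u ∈ Y ∪ X then 1 else 0) + f u) X
          hfeas hkeep
        beta_reduce at hb1 ⊢
        rw [hesum] at hb1
        rcases hSB with h0 | h0
        · have hy := hylem h0
          omega
        · omega
      · have hb2 := wt_add_bound b (fun u => (if u ∈ Y ∪ X then 1 else 0) + f u) (Y ∪ X)
          hnew
        beta_reduce at hb2 ⊢
        rw [hesum, hUcard] at hb2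
        omega

lemma main : ∀ (d : ℕ) (C : (Fin d → Bool) → ℕ), 3^d + 1 ≤ wt C → Coverable (cube d) C := by
  intro d
  induction d with
  | zero => exact fun C h => base0 C h
  | succ d ih =>
    intro C hC
    rcases Nat.eq_zero_or_pos d with hd0 | hd
    · subst hd0; exact base1 C hC
    · have hglue : glue (fun x => C (Fin.cons false x)) (fun x => C (Fin.cons true x)) = C :=
        glue_comp C
      have hsplit := wt_split C
      by_cases hB : wt (fun x => C (Fin.cons true x)) ≤ 3^d
      · obtain ⟨e, hfe, hA', hB'⟩ := core d hd (fun x => C (Fin.cons false x))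
          (fun x => C (Fin.cons true x)) (by omega) hB
        have htr := transfer_ft (∑ u, e u) (fun x => C (Fin.cons false x))
          (fun x => C (Fin.cons true x)) e rfl hfe
        obtain ⟨C', r2, hC'⟩ := assemble ih hA' hB'
        refine ⟨C', ?_, hC'⟩
        rw [← hglue]
        exact htr.trans r2
      · by_cases hA : wt (fun x => C (Fin.cons false x)) ≤ 3^d
        · obtain ⟨e, hfe, hB', hA'⟩ := core d hd (fun x => C (Fin.cons true x))
            (fun x => C (Fin.cons false x)) (by omega) hA
          have htr := transfer_tf (∑ u, e u) (fun x => C (Fin.cons false x))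
            (fun x => C (Fin.cons true x)) e rfl hfe
          obtain ⟨C', r2, hC'⟩ := assemble ih hA' hB'
          refine ⟨C', ?_, hC'⟩
          rw [← hglue]
          exact htr.trans r2
        · obtain ⟨C', r2, hC'⟩ := assemble ih
            (show 3^d + 1 ≤ wt (fun x => C (Fin.cons false x)) by omega)
            (show 3^d + 1 ≤ wt (fun x => C (Fin.cons true x)) by omega)
          refine ⟨C', ?_, hC'⟩
          rw [← hglue]
          exact r2

end CoverPeb

/-- Every good configuration on `Q^d` is coverable: if `C` has nonempty support
and `|C| ≥ 3^d − |σ(C)| + 1`, then `C` is coverable. -/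
theorem good_configuration_coverable (d : ℕ) (C : (Fin d → Bool) → ℕ)
    (hne : (Finset.univ.filter fun x => 0 < C x).Nonempty)
    (hgood : 3 ^ d - (Finset.univ.filter fun x => 0 < C x).card + 1 ≤ ∑ v, C v) :
    Coverable (cube d) C := by
  have hk : 1 ≤ (Finset.univ.filter fun x => 0 < C x).card := Finset.card_pos.mpr hne
  apply CoverPeb.main d C
  have hwt : CoverPeb.wt C = (∑ v, C v) + (Finset.univ.filter fun x => 0 < C x).card := rfl
  omega
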